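/- Let θ > 0 and λ₁, λ₂ ≥ 0 with (λ₁,λ₂) ≠ (0,0). Define M : ℝ → ℝ by M(y) = 1 for y ≤ 0 and M(x) = θ^{⌊x⌋+1} · ∏_{k=0}^{⌊x⌋} (λ₁ + λ₂(x−k) + θ)^{-1} for x > 0. Then for every non-integer x > 0, θ·(M(x−1) − M(x)) = (λ₁ + λ₂x)·M(x). -/

import Mathlib

/-- For the Poisson case, the joint Laplace transform of `(τ(x), A(x))` for non-integer `x`,
`M(y) = 1` for `y ≤ 0` and `M(x) = θ^(⌊x⌋+1) ∏_{k=0}^{⌊x⌋} (λ₁ + λ₂(x-k) + θ)⁻¹` for `x > 0`,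
satisfies `θ(M(x-1) - M(x)) = (λ₁ + λ₂ x) M(x)` for every non-integer `x > 0`. -/
theorem stmt_6 (θ l1 l2 : ℝ) (hθ : 0 < θ) (hl1 : 0 ≤ l1) (hl2 : 0 ≤ l2)
    (hne : (l1, l2) ≠ (0, 0))
    (M : ℝ → ℝ)
    (hM0 : ∀ y : ℝ, y ≤ 0 → M y = 1)
    (hMpos : ∀ x : ℝ, 0 < x →
      M x = θ ^ (⌊x⌋.toNat + 1) *
        ∏ k ∈ Finset.range (⌊x⌋.toNat + 1), (l1 + l2 * (x - (k : ℝ)) + θ)⁻¹) :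
    ∀ x : ℝ, 0 < x → (¬ ∃ n : ℤ, x = (n : ℝ)) →
      θ * (M (x - 1) - M x) = (l1 + l2 * x) * M x := by
  intro x hx hnint
  have hc : 0 < l1 + l2 * x + θ := by positivity
  have hc' : l1 + l2 * x + θ ≠ 0 := ne_of_gt hc
  have hx1 : x ≠ 1 := fun h => hnint ⟨1, by simpa using h⟩
  have key : θ * M (x - 1) = (l1 + l2 * x + θ) * M x := by
    rcases lt_or_gt_of_ne hx1 with h1 | h1
    · -- 0 < x < 1
      have hf : ⌊x⌋ = 0 := Int.floor_eq_zero_iff.2 ⟨hx.le, h1⟩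
      have hM1 : M (x - 1) = 1 := hM0 _ (by linarith)
      rw [hM1, hMpos x hx, hf]
      simp only [Int.toNat_zero, zero_add, pow_one]
      rw [Finset.prod_range_one]
      push_cast
      field_simp
      rw [sub_zero, div_self hc']
    · -- x > 1
      have hf1 : (1:ℝ) ≤ x := h1.le
      have hfl : 1 ≤ ⌊x⌋ := by exact_mod_cast Int.le_floor.2 (by exact_mod_cast hf1)
      have hfsub : ⌊x - 1⌋ = ⌊x⌋ - 1 := by
        have := Int.floor_sub_intCast x 1
        simpa using this
      have htn : (⌊x - 1⌋).toNat + 1 = ⌊x⌋.toNat := by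
        rw [hfsub]; omega
      have hx1pos : 0 < x - 1 := by linarith
      rw [hMpos _ hx1pos, hMpos x hx]
      set n := ⌊x⌋.toNat with hn
      have hn1 : (⌊x - 1⌋).toNat + 1 = n := htn
      rw [hn1]
      have hprod : ∏ k ∈ Finset.range (n + 1), (l1 + l2 * (x - (k : ℝ)) + θ)⁻¹
          = (∏ k ∈ Finset.range n, (l1 + l2 * (x - 1 - (k : ℝ)) + θ)⁻¹)
            * (l1 + l2 * x + θ)⁻¹ := by
        rw [Finset.prod_range_succ']
        congr 1
        · apply Finset.prod_congr rfl
          intro k _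
          push_cast
          ring_nf
        · norm_num
      rw [hprod]
      linear_combination -(θ ^ n * θ *
        ∏ k ∈ Finset.range n, (l1 + l2 * (x - 1 - (k : ℝ)) + θ)⁻¹) *
        mul_inv_cancel₀ hc'
  have hMx : θ * M (x - 1) - θ * M x = (l1 + l2 * x) * M x := by
    rw [key]; ring
  linarith [hMx, mul_sub θ (M (x-1)) (M x)]
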